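/- Let N ≥ 2, let μ₀ be in the interior of the standard simplex Δ ⊂ ℝ^N, and let R = (√N/√(N−1)) · minⱼ μ₀(j). Then R is maximal: for every R' > R there exists a point p in the hyperplane {x : ∑ⱼ x(j) = 1} with ‖p − μ₀‖₂ = R' and p ∉ Δ (some coordinate of p is negative). -/

import Mathlib

private lemma sum_ite_fin (N : ℕ) (j0 : Fin N) (a b : ℝ) :
    ∑ j : Fin N, (if j = j0 then a else b) = a + ((N : ℝ) - 1) * b := by
  have h1 : ∑ j : Fin N, (if j = j0 then a else b)
      = ∑ j : Fin N, (b + if j = j0 then a - b else 0) := by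
    apply Finset.sum_congr rfl
    intro j _
    split <;> ring
  rw [h1, Finset.sum_add_distrib, Finset.sum_const, Finset.sum_ite_eq' Finset.univ j0]
  simp
  ring

/-- Sharpness of the inradius `R = (√N/√(N-1)) · minⱼ μ₀(j)`: for any radius `R' > R`
there is a point of the hyperplane at distance exactly `R'` from `μ₀` outside the simplex. -/
theorem stmt1 (N : ℕ) (hN : 2 ≤ N) (μ₀ : EuclideanSpace ℝ (Fin N))
    (hpos : ∀ j, 0 < μ₀ j) (hsum : ∑ j, μ₀ j = 1)
    (m : ℝ) (hm : ∀ j, m ≤ μ₀ j) (hm' : ∃ j, μ₀ j = m)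
    (R : ℝ) (hR : R = Real.sqrt N / Real.sqrt (N - 1) * m)
    (R' : ℝ) (hR' : R < R') :
    ∃ p : EuclideanSpace ℝ (Fin N), (∑ j, p j = 1) ∧ ‖p - μ₀‖ = R' ∧ ∃ j, p j < 0 := by
  obtain ⟨j0, hj0⟩ := hm'
  have hNR : (2 : ℝ) ≤ (N : ℝ) := by exact_mod_cast hN
  have hN0 : (0 : ℝ) < (N : ℝ) := by linarith
  have hN1 : (0 : ℝ) < (N : ℝ) - 1 := by linarith
  have hmpos : 0 < m := hj0 ▸ hpos j0
  have hsN : 0 < Real.sqrt N := Real.sqrt_pos.mpr hN0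
  have hsN1 : 0 < Real.sqrt ((N : ℝ) - 1) := Real.sqrt_pos.mpr hN1
  have hRpos : 0 < R := by
    rw [hR]; positivity
  have hR'pos : 0 < R' := lt_trans hRpos hR'
  set L : ℝ := Real.sqrt ((N : ℝ) * ((N : ℝ) - 1)) with hL
  have hLpos : 0 < L := Real.sqrt_pos.mpr (by positivity)
  have hLmul : L = Real.sqrt N * Real.sqrt ((N : ℝ) - 1) := Real.sqrt_mul (le_of_lt hN0) _
  set c : ℝ := R' / L with hc
  have hcpos : 0 < c := div_pos hR'pos hLpos
  set v : EuclideanSpace ℝ (Fin N) := WithLp.toLp 2 (fun j => if j = j0 then -((N : ℝ) - 1) else 1) with hv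
  have hvdef : ∀ j, v j = if j = j0 then -((N : ℝ) - 1) else 1 := fun j => rfl
  set p : EuclideanSpace ℝ (Fin N) := μ₀ + c • v with hp
  have hpj : ∀ j, p j = μ₀ j + c * v j := fun j => rfl
  refine ⟨p, ?_, ?_, j0, ?_⟩
  · -- sum = 1
    have : ∑ j, p j = ∑ j, (μ₀ j + c * v j) := Finset.sum_congr rfl fun j _ => hpj j
    rw [this, Finset.sum_add_distrib, hsum, ← Finset.mul_sum]
    have : ∑ j, v j = 0 := by
      simp only [hvdef]
      have := sum_ite_fin N j0 (-((N : ℝ) - 1)) 1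
      rw [this]; ring
    rw [this]; ring
  · -- norm
    have hpsub : p - μ₀ = c • v := by rw [hp]; abel
    have hnv : ‖v‖ = L := by
      rw [EuclideanSpace.norm_eq]
      have : ∑ j, ‖v j‖ ^ 2 = (N : ℝ) * ((N : ℝ) - 1) := by
        have h1 : ∀ j : Fin N, ‖v j‖ ^ 2 = (if j = j0 then (((N : ℝ) - 1))^2 else 1) := by
          intro j
          by_cases hj : j = j0
          · rw [hvdef, if_pos hj, if_pos hj, Real.norm_eq_abs, sq_abs]; ring
          · rw [hvdef, if_neg hj, if_neg hj, Real.norm_eq_abs, abs_one, one_pow]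
        rw [Finset.sum_congr rfl fun j _ => h1 j, sum_ite_fin]
        ring
      rw [this]
    rw [hpsub, norm_smul, hnv, Real.norm_eq_abs, abs_of_pos hcpos, hc,
      div_mul_cancel₀ _ (ne_of_gt hLpos)]
  · -- negativity at j0
    have hvj0 : v j0 = -((N : ℝ) - 1) := if_pos rfl
    rw [hpj, hvj0, hj0]
    have hkey : m * L < R' * ((N : ℝ) - 1) := by
      have h1 : R * ((N : ℝ) - 1) < R' * ((N : ℝ) - 1) :=
        mul_lt_mul_of_pos_right hR' hN1
      have hsq : Real.sqrt ((N : ℝ) - 1) * Real.sqrt ((N : ℝ) - 1) = (N : ℝ) - 1 :=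
        Real.mul_self_sqrt hN1.le
      have h2 : R * ((N : ℝ) - 1) = m * L := by
        rw [hR, hLmul]
        field_simp
        linear_combination (-1 : ℝ) * hsq
      linarith
    have : m < c * ((N : ℝ) - 1) := by
      rw [hc, div_mul_eq_mul_div, lt_div_iff₀ hLpos]
      linarith
    linarith
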